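/- Let f : ℤ → ℝ with Σ_{m} |f(m)|/√(1+|m|) < ∞ and n ∈ ℤ. Then lim_{t→0⁺} Σ_{m∈ℤ} f(m) ∫₁^∞ p_u(n-m) (e^{-t²/(4u)} - 1)/u du = 0; more precisely, the absolute value of this sum is bounded by C t² √(1+|n|) Σ_m |f(m)|/√(1+|m|) for t ∈ (0,1). -/

import Mathlib

open MeasureTheory Real Set
open scoped ENNReal NNReal

/-- The modified Bessel function of the first kind of integer order, via its power series. -/
noncomputable def besselI (k : ℕ) (z : ℝ) : ℝ :=
  ∑' m : ℕ, (z/2) ^ (2*m + k) / ((Nat.factorial m : ℝ) * (Nat.factorial (m + k) : ℝ))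

lemma summable_besselI (k : ℕ) (z : ℝ) :
    Summable (fun m : ℕ => (z/2) ^ (2*m + k) / ((Nat.factorial m : ℝ) * (Nat.factorial (m + k) : ℝ))) := by
  apply Summable.of_abs
  have h := (Real.summable_pow_div_factorial ((|z|/2)^2)).mul_right ((|z|/2)^k)
  refine h.of_nonneg_of_le (fun m => abs_nonneg _) (fun m => ?_)
  have hm : (0:ℝ) < m.factorial := by exact_mod_cast m.factorial_pos
  have hmk : (1:ℝ) ≤ (m+k).factorial := by exact_mod_cast (m+k).factorial_pos
  have habs : |(z/2) ^ (2*m + k) / ((m.factorial : ℝ) * ((m+k).factorial : ℝ))|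
      = (|z|/2) ^ (2*m + k) / ((m.factorial : ℝ) * ((m+k).factorial : ℝ)) := by
    have hden : (0:ℝ) < (m.factorial : ℝ) * ((m+k).factorial : ℝ) :=
      mul_pos hm (by exact_mod_cast (m+k).factorial_pos)
    rw [abs_div, abs_pow, abs_div, abs_two, abs_of_pos hden]
  rw [habs]
  calc (|z|/2) ^ (2*m + k) / ((m.factorial : ℝ) * ((m+k).factorial : ℝ))
      ≤ (|z|/2) ^ (2*m + k) / ((m.factorial : ℝ) * 1) := by
        apply div_le_div_of_nonneg_left (by positivity) (by positivity)
        exact mul_le_mul_of_nonneg_left hmk hm.le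
    _ = ((|z|/2)^2) ^ m * (|z|/2)^k / (m.factorial : ℝ) := by
        rw [mul_one, ← pow_mul, ← pow_add]
    _ = ((|z|/2)^2) ^ m / (m.factorial : ℝ) * (|z|/2)^k := by ring

lemma besselI_nonneg (k : ℕ) {z : ℝ} (hz : 0 ≤ z) : 0 ≤ besselI k z :=
  tsum_nonneg fun m => by positivity

lemma two_pow_factorial (m k : ℕ) :
    ((2*m+k).factorial : ℝ) ≤ 2^(2*m+k) * (m.factorial : ℝ) * ((m+k).factorial : ℝ) := by
  have h1 : (2*m+k).factorial = (2*m+k).choose m * m.factorial * (m+k).factorial := by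
    have := Nat.choose_mul_factorial_mul_factorial (show m ≤ 2*m+k by omega)
    rw [show 2*m+k-m = m+k by omega] at this
    omega
  have h2 : (2*m+k).choose m ≤ 2^(2*m+k) := by
    calc (2*m+k).choose m ≤ ∑ i ∈ Finset.range (2*m+k+1), (2*m+k).choose i :=
          Finset.single_le_sum (fun i _ => Nat.zero_le _) (by simp; omega)
      _ = 2^(2*m+k) := Nat.sum_range_choose _
  have : (2*m+k).factorial ≤ 2^(2*m+k) * m.factorial * (m+k).factorial := by
    rw [h1]; exact Nat.mul_le_mul_right _ (Nat.mul_le_mul_right _ h2)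
  exact_mod_cast this

lemma besselI_le_exp (k : ℕ) {z : ℝ} (hz : 0 ≤ z) : besselI k z ≤ Real.exp z := by
  have hexp : Real.exp z = ∑' n : ℕ, z^n / n.factorial := by
    rw [Real.exp_eq_exp_ℝ, NormedSpace.exp_eq_tsum_div]
  rw [besselI, hexp]
  apply Summable.tsum_le_tsum_of_inj (fun m => 2*m+k)
  · intro a b hab; dsimp only at hab; omega
  · intro c _; positivity
  · intro m
    have hm : (0:ℝ) < m.factorial := by exact_mod_cast m.factorial_pos
    have hmk : (0:ℝ) < (m+k).factorial := by exact_mod_cast (m+k).factorial_pos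
    have hf : (0:ℝ) < ((2*m+k).factorial : ℝ) := by exact_mod_cast (2*m+k).factorial_pos
    rw [div_pow, div_le_div_iff₀ (by positivity) hf]
    calc z^(2*m+k) / 2^(2*m+k) * ((2*m+k).factorial : ℝ)
        ≤ z^(2*m+k) / 2^(2*m+k) * (2^(2*m+k) * (m.factorial : ℝ) * ((m+k).factorial : ℝ)) := by
          apply mul_le_mul_of_nonneg_left (two_pow_factorial m k) (by positivity)
      _ = z^(2*m+k) * ((m.factorial : ℝ) * ((m+k).factorial : ℝ)) := by
          field_simp
  · exact summable_besselI k z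
  · exact Real.summable_pow_div_factorial z

lemma measurable_besselI (k : ℕ) : Measurable (besselI k) := by
  apply measurable_of_tendsto_metrizable
    (f := fun N z => ∑ m ∈ Finset.range N, (z/2) ^ (2*m + k) / ((Nat.factorial m : ℝ) * (Nat.factorial (m + k) : ℝ)))
  · intro N
    apply Finset.measurable_sum
    intro m _
    exact ((measurable_id.div_const 2).pow_const _).div_const _
  · rw [tendsto_pi_nhds]
    intro z
    exact (summable_besselI k z).hasSum.tendsto_sum_nat

lemma integrableOn_exp_neg_two_mul_pow (j : ℕ) :
    IntegrableOn (fun u : ℝ => Real.exp (-2*u) * u^j) (Ioi 0) := by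
  have h := integrableOn_rpow_mul_exp_neg_mul_rpow (p := 1) (s := (j:ℝ)) (b := 2)
    (lt_of_lt_of_le neg_one_lt_zero (Nat.cast_nonneg j)) one_pos two_pos
  apply h.congr_fun ?_ measurableSet_Ioi
  intro x hx
  show x ^ (j:ℝ) * Real.exp (-2 * x ^ (1:ℝ)) = Real.exp (-2*x) * x^j
  rw [Real.rpow_one, Real.rpow_natCast, mul_comm]

lemma integral_exp_neg_two_mul_pow (j : ℕ) :
    ∫ u in Ioi (0:ℝ), Real.exp (-2*u) * u^j = (j.factorial : ℝ) / 2^(j+1) := by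
  have h := integral_rpow_mul_exp_neg_mul_Ioi (a := (j:ℝ)+1) (r := 2) (by positivity) two_pos
  simp only [add_sub_cancel_right] at h
  have heq : ∀ t ∈ Ioi (0:ℝ), t ^ (j:ℝ) * Real.exp (-(2*t)) = Real.exp (-2*t) * t^j := by
    intro t _
    rw [Real.rpow_natCast, mul_comm, neg_mul]
  rw [setIntegral_congr_fun measurableSet_Ioi heq] at h
  rw [Real.Gamma_nat_eq_factorial] at h
  rw [h, show ((j:ℝ)+1) = ((j+1 : ℕ) : ℝ) by push_cast; ring, Real.rpow_natCast]
  rw [div_pow, one_pow]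
  ring

lemma integrableOn_inv_sq : IntegrableOn (fun u : ℝ => 1/u^2) (Ioi (1:ℝ)) := by
  have h := integrableOn_Ioi_rpow_of_lt (show (-2:ℝ) < -1 by norm_num) one_pos
  apply h.congr_fun ?_ measurableSet_Ioi
  intro x hx
  have hx0 : (0:ℝ) < x := lt_trans one_pos hx
  show x ^ (-2:ℝ) = 1/x^2
  rw [show (-2:ℝ) = -(2:ℕ) by norm_num, Real.rpow_neg hx0.le, Real.rpow_natCast, one_div]

lemma integral_inv_sq : ∫ u in Ioi (1:ℝ), 1/u^2 = 1 := by
  have h := integral_Ioi_rpow_of_lt (show (-2:ℝ) < -1 by norm_num) one_pos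
  have heq : ∀ x ∈ Ioi (1:ℝ), x ^ (-2:ℝ) = 1/x^2 := by
    intro x hx
    have hx0 : (0:ℝ) < x := lt_trans one_pos hx
    rw [show (-2:ℝ) = -(2:ℕ) by norm_num, Real.rpow_neg hx0.le, Real.rpow_natCast, one_div]
  rw [setIntegral_congr_fun measurableSet_Ioi heq] at h
  rw [h]; norm_num

lemma choose_le_two_pow' (n k : ℕ) : n.choose k ≤ 2^n := by
  by_cases h : k ≤ n
  · calc n.choose k ≤ ∑ i ∈ Finset.range (n+1), n.choose i :=
        Finset.single_le_sum (fun i _ => Nat.zero_le _) (by simp; omega)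
      _ = 2^n := Nat.sum_range_choose _
  · rw [Nat.choose_eq_zero_of_lt (by omega)]; exact Nat.zero_le _

lemma telescope_bound (s : ℕ) (N : ℕ) :
    ∑ m ∈ Finset.range N, (2:ℝ)/((2*(m:ℝ)+s+2)*(2*(m:ℝ)+s+1)) ≤ 2/((s:ℝ)+1) := by
  set g : ℕ → ℝ := fun i => 2/(2*(i:ℝ)+s+1) with hg
  have key : ∀ m : ℕ, (2:ℝ)/((2*(m:ℝ)+s+2)*(2*(m:ℝ)+s+1)) ≤ g m - g (m+1) := by
    intro m
    have hA : (0:ℝ) < 2*(m:ℝ)+s+1 := by positivity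
    have hB : (0:ℝ) < 2*(m:ℝ)+s+2 := by positivity
    have hC : (0:ℝ) < 2*(m:ℝ)+s+3 := by positivity
    have h1 : g m - g (m+1) = 4/((2*(m:ℝ)+s+1)*(2*(m:ℝ)+s+3)) := by
      rw [hg]
      push_cast
      rw [div_sub_div _ _ (by positivity : (0:ℝ) < 2*(m:ℝ)+s+1).ne' (by positivity : (0:ℝ) < 2*((m:ℝ)+1)+s+1).ne']
      rw [show 2*((m:ℝ)+1)+s+1 = 2*(m:ℝ)+s+3 by ring]
      congr 1
      ring
    rw [h1, div_le_div_iff₀ (by positivity) (by positivity)]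
    nlinarith
  calc ∑ m ∈ Finset.range N, (2:ℝ)/((2*(m:ℝ)+s+2)*(2*(m:ℝ)+s+1))
      ≤ ∑ m ∈ Finset.range N, (g m - g (m+1)) := Finset.sum_le_sum (fun m _ => key m)
    _ = g 0 - g N := Finset.sum_range_sub' g N
    _ ≤ g 0 := by
        have : (0:ℝ) ≤ g N := by rw [hg]; positivity
        linarith
    _ = 2/((s:ℝ)+1) := by rw [hg]; norm_num

lemma cm_le_bm (s m : ℕ) :
    (∫ u in Ioi (1:ℝ), Real.exp (-2*u) * u^(2*m+s) / ((m.factorial : ℝ) * ((m+(s+2)).factorial : ℝ)))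
      ≤ 2/((2*(m:ℝ)+s+2)*(2*(m:ℝ)+s+1)) := by
  have hCpos : (0:ℝ) < (m.factorial : ℝ) * ((m+(s+2)).factorial : ℝ) :=
    mul_pos (by exact_mod_cast m.factorial_pos) (by exact_mod_cast (m+(s+2)).factorial_pos)
  have hint : IntegrableOn (fun u : ℝ => Real.exp (-2*u) * u^(2*m+s)) (Ioi 0) :=
    integrableOn_exp_neg_two_mul_pow (2*m+s)
  have h1 : (∫ u in Ioi (1:ℝ), Real.exp (-2*u) * u^(2*m+s))
      ≤ ∫ u in Ioi (0:ℝ), Real.exp (-2*u) * u^(2*m+s) := by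
    apply setIntegral_mono_set hint
    · filter_upwards [ae_restrict_mem measurableSet_Ioi] with u hu
      have : (0:ℝ) < u := hu
      positivity
    · exact HasSubset.Subset.eventuallyLE (Ioi_subset_Ioi zero_le_one)
  rw [integral_exp_neg_two_mul_pow (2*m+s)] at h1
  rw [integral_div]
  have h2 : (∫ u in Ioi (1:ℝ), Real.exp (-2*u) * u^(2*m+s)) / ((m.factorial : ℝ) * ((m+(s+2)).factorial : ℝ))
      ≤ ((2*m+s).factorial : ℝ) / 2^(2*m+s+1) / ((m.factorial : ℝ) * ((m+(s+2)).factorial : ℝ)) :=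
    div_le_div_of_nonneg_right h1 hCpos.le
  refine h2.trans ?_
  -- now the combinatorial bound
  have hnat : (2*m+s).factorial * ((2*m+s+2)*(2*m+s+1)) ≤ 2^(2*m+s+2) * (m.factorial * (m+(s+2)).factorial) := by
    have e1 : (2*m+s).factorial * ((2*m+s+2)*(2*m+s+1)) = (2*m+s+2).factorial := by
      rw [show 2*m+s+2 = (2*m+s+1)+1 by ring, Nat.factorial_succ,
        show 2*m+s+1 = (2*m+s)+1 by ring, Nat.factorial_succ]
      ring
    have e2 : (2*m+s+2).choose m * m.factorial * (m+(s+2)).factorial = (2*m+s+2).factorial := by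
      have := Nat.choose_mul_factorial_mul_factorial (show m ≤ 2*m+s+2 by omega)
      rw [show 2*m+s+2-m = m+(s+2) by omega] at this
      exact this
    calc (2*m+s).factorial * ((2*m+s+2)*(2*m+s+1)) = (2*m+s+2).factorial := e1
      _ = (2*m+s+2).choose m * m.factorial * (m+(s+2)).factorial := e2.symm
      _ ≤ 2^(2*m+s+2) * m.factorial * (m+(s+2)).factorial :=
          Nat.mul_le_mul_right _ (Nat.mul_le_mul_right _ (choose_le_two_pow' _ _))
      _ = 2^(2*m+s+2) * (m.factorial * (m+(s+2)).factorial) := by ring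
  have hnatR : ((2*m+s).factorial : ℝ) * ((2*(m:ℝ)+s+2)*(2*(m:ℝ)+s+1))
      ≤ 2^(2*m+s+2) * ((m.factorial : ℝ) * ((m+(s+2)).factorial : ℝ)) := by
    exact_mod_cast hnat
  rw [div_div, div_le_div_iff₀ (by positivity) (by positivity)]
  calc ((2*m+s).factorial : ℝ) * ((2*(m:ℝ)+s+2)*(2*(m:ℝ)+s+1))
      ≤ 2^(2*m+s+2) * ((m.factorial : ℝ) * ((m+(s+2)).factorial : ℝ)) := hnatR
    _ = 2 * (2^(2*m+s+1) * ((m.factorial : ℝ) * ((m+(s+2)).factorial : ℝ))) := by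
        rw [show 2*m+s+2 = (2*m+s+1)+1 by ring, pow_succ]; ring

lemma besselI_int_bound_ge2 (s : ℕ) :
    ∫ u in Ioi (1:ℝ), Real.exp (-2*u) * besselI (s+2) (2*u) / u^2 ≤ 2/((s:ℝ)+1) := by
  set C : ℕ → ℝ := fun m => (m.factorial : ℝ) * ((m+(s+2)).factorial : ℝ) with hC
  have hCpos : ∀ m, 0 < C m := fun m =>
    mul_pos (by exact_mod_cast m.factorial_pos) (by exact_mod_cast (m+(s+2)).factorial_pos)
  set F : ℕ → ℝ → ℝ := fun m u => Real.exp (-2*u) * u^(2*m+s) / C m with hF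
  have hpt : ∀ u ∈ Ioi (1:ℝ), Real.exp (-2*u) * besselI (s+2) (2*u) / u^2 = ∑' m, F m u := by
    intro u hu
    have hu0 : (0:ℝ) < u := lt_trans one_pos hu
    have h1 : besselI (s+2) (2*u) = ∑' m : ℕ, u^(2*m+(s+2)) / C m := by
      rw [besselI]
      congr 1; funext m
      rw [show (2*u/2) = u by ring, hC]
    rw [h1, ← Summable.tsum_mul_left (Real.exp (-2*u)), ← tsum_div_const]
    · congr 1; funext m
      rw [hF]
      rw [show 2*m+(s+2) = (2*m+s)+2 by ring, pow_add]
      field_simp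
    · -- summability of fun m => u^(2m+s+2)/C m
      have := summable_besselI (s+2) (2*u)
      simp only [show (2*u/2) = u by ring] at this
      exact this
  rw [setIntegral_congr_fun measurableSet_Ioi hpt]
  have hmeas : ∀ m, AEStronglyMeasurable (F m) (volume.restrict (Ioi 1)) := by
    intro m
    have : Measurable (F m) :=
      ((Real.measurable_exp.comp (measurable_id.const_mul (-2))).mul
        (measurable_id.pow_const (2*m+s))).div_const _
    exact this.aestronglyMeasurable
  have hFint : ∀ m, IntegrableOn (F m) (Ioi 1) := fun m =>
    ((integrableOn_exp_neg_two_mul_pow (2*m+s)).mono_set (Ioi_subset_Ioi zero_le_one)).div_const _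
  have hFnn : ∀ m, 0 ≤ᵐ[volume.restrict (Ioi 1)] F m := by
    intro m
    filter_upwards [ae_restrict_mem measurableSet_Ioi] with u hu
    have hu0 : (0:ℝ) < u := lt_trans one_pos hu
    exact div_nonneg (by positivity) (hCpos m).le
  have hcm_nonneg : ∀ m, 0 ≤ ∫ u in Ioi (1:ℝ), F m u := fun m =>
    setIntegral_nonneg measurableSet_Ioi (fun u hu =>
      div_nonneg (by have : (0:ℝ) < u := lt_trans one_pos hu; positivity) (hCpos m).le)
  have hcb : ∀ m, (∫ u in Ioi (1:ℝ), F m u) ≤ 2/((2*(m:ℝ)+s+2)*(2*(m:ℝ)+s+1)) := fun m =>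
    cm_le_bm s m
  have hlint : (∑' m, ∫⁻ u in Ioi (1:ℝ), (‖F m u‖₊ : ℝ≥0∞)) ≠ ⊤ := by
    have heq : ∀ m, ∫⁻ u in Ioi (1:ℝ), (‖F m u‖₊ : ℝ≥0∞) = ENNReal.ofReal (∫ u in Ioi (1:ℝ), F m u) := by
      intro m
      rw [ofReal_integral_eq_lintegral_ofReal (hFint m) (hFnn m)]
      apply lintegral_congr_ae
      filter_upwards [hFnn m] with u hu
      exact Real.enorm_eq_ofReal hu
    have hle : ∑' m, ∫⁻ u in Ioi (1:ℝ), (‖F m u‖₊ : ℝ≥0∞) ≤ ENNReal.ofReal (2/((s:ℝ)+1)) := by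
      calc ∑' m, ∫⁻ u in Ioi (1:ℝ), (‖F m u‖₊ : ℝ≥0∞)
          = ∑' m, ENNReal.ofReal (∫ u in Ioi (1:ℝ), F m u) := by
            exact tsum_congr heq
        _ ≤ ENNReal.ofReal (2/((s:ℝ)+1)) := by
            apply ENNReal.tsum_le_of_sum_range_le
            intro N
            calc ∑ m ∈ Finset.range N, ENNReal.ofReal (∫ u in Ioi (1:ℝ), F m u)
                = ENNReal.ofReal (∑ m ∈ Finset.range N, ∫ u in Ioi (1:ℝ), F m u) :=
                  (ENNReal.ofReal_sum_of_nonneg (fun m _ => hcm_nonneg m)).symm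
              _ ≤ ENNReal.ofReal (2/((s:ℝ)+1)) := by
                  apply ENNReal.ofReal_le_ofReal
                  calc ∑ m ∈ Finset.range N, ∫ u in Ioi (1:ℝ), F m u
                      ≤ ∑ m ∈ Finset.range N, 2/((2*(m:ℝ)+s+2)*(2*(m:ℝ)+s+1)) :=
                        Finset.sum_le_sum (fun m _ => hcb m)
                    _ ≤ 2/((s:ℝ)+1) := telescope_bound s N
    exact (hle.trans_lt ENNReal.ofReal_lt_top).ne
  rw [integral_tsum hmeas hlint]
  apply Real.tsum_le_of_sum_range_le hcm_nonneg
  intro N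
  calc ∑ m ∈ Finset.range N, ∫ u in Ioi (1:ℝ), F m u
      ≤ ∑ m ∈ Finset.range N, 2/((2*(m:ℝ)+s+2)*(2*(m:ℝ)+s+1)) :=
        Finset.sum_le_sum (fun m _ => hcb m)
    _ ≤ 2/((s:ℝ)+1) := telescope_bound s N

lemma triv_case (k : ℕ) (h : (k:ℝ) ≤ 15) : (1:ℝ) ≤ 4 / Real.sqrt (1+(k:ℝ)) := by
  have hs1 : 0 < Real.sqrt (1+(k:ℝ)) := Real.sqrt_pos.mpr (by positivity)
  rw [le_div_iff₀ hs1, one_mul]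
  calc Real.sqrt (1+(k:ℝ)) ≤ Real.sqrt 16 := Real.sqrt_le_sqrt (by linarith)
    _ = 4 := by
        rw [show (16:ℝ) = 4^2 by norm_num, Real.sqrt_sq]; norm_num

lemma besselI_int_trivial (k : ℕ) :
    ∫ u in Ioi (1:ℝ), Real.exp (-2*u) * besselI k (2*u) / u^2 ≤ 1 := by
  have : (∫ u in Ioi (1:ℝ), Real.exp (-2*u) * besselI k (2*u) / u^2)
      ≤ ∫ u in Ioi (1:ℝ), 1/u^2 := by
    apply integral_mono_of_nonneg
    · filter_upwards [ae_restrict_mem measurableSet_Ioi] with u hu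
      have hu0 : (0:ℝ) < u := lt_trans one_pos hu
      have := besselI_nonneg k (by positivity : (0:ℝ) ≤ 2*u)
      positivity
    · exact integrableOn_inv_sq
    · filter_upwards [ae_restrict_mem measurableSet_Ioi] with u hu
      have hu0 : (0:ℝ) < u := lt_trans one_pos hu
      have h1 : Real.exp (-2*u) * besselI k (2*u) ≤ 1 := by
        calc Real.exp (-2*u) * besselI k (2*u) ≤ Real.exp (-2*u) * Real.exp (2*u) :=
              mul_le_mul_of_nonneg_left (besselI_le_exp k (by positivity)) (Real.exp_nonneg _)
          _ = 1 := by rw [← Real.exp_add]; norm_num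
      exact div_le_div_of_nonneg_right h1 (by positivity)
  exact this.trans integral_inv_sq.le

lemma besselI_int_bound (k : ℕ) :
    ∫ u in Ioi (1:ℝ), Real.exp (-2*u) * besselI k (2*u) / u^2 ≤ 4 / Real.sqrt (1+(k:ℝ)) := by
  match k with
  | 0 => exact (besselI_int_trivial 0).trans (triv_case 0 (by norm_num))
  | 1 => exact (besselI_int_trivial 1).trans (triv_case 1 (by norm_num))
  | (s+2) =>
    refine (besselI_int_bound_ge2 s).trans ?_
    have hcast : (1:ℝ) + ((s+2:ℕ):ℝ) = (s:ℝ)+3 := by push_cast; ring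
    rw [hcast]
    have hsq : Real.sqrt ((s:ℝ)+3) ≤ (s:ℝ)+2 := by
      rw [show (s:ℝ)+2 = Real.sqrt (((s:ℝ)+2)^2) from (Real.sqrt_sq (by positivity)).symm]
      apply Real.sqrt_le_sqrt
      nlinarith
    rw [div_le_div_iff₀ (by positivity) (Real.sqrt_pos.mpr (by positivity))]
    nlinarith [Real.sqrt_nonneg ((s:ℝ)+3)]

/-- The heat kernel of the discrete Laplacian on ℤ: p_u(k) = e^{-2u} I_{|k|}(2u). -/
noncomputable def discHeat (u : ℝ) (k : ℤ) : ℝ := Real.exp (-2*u) * besselI k.natAbs (2*u)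

lemma integral_term_bound (j : ℤ) (t : ℝ) :
    |∫ u in Ioi (1:ℝ), discHeat u j * (Real.exp (-t^2/(4*u)) - 1) / u|
      ≤ t^2 / Real.sqrt (1 + (j.natAbs:ℝ)) := by
  set k := j.natAbs with hk
  have hmeas_h : Measurable fun u : ℝ => Real.exp (-2*u) * besselI k (2*u) / u^2 :=
    ((Real.measurable_exp.comp (measurable_id.const_mul (-2))).mul
      ((measurable_besselI k).comp (measurable_id.const_mul 2))).div (measurable_id.pow_const 2)
  have hone : ∀ u : ℝ, 0 < u → Real.exp (-2*u) * besselI k (2*u) ≤ 1 := by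
    intro u hu0
    calc Real.exp (-2*u) * besselI k (2*u) ≤ Real.exp (-2*u) * Real.exp (2*u) :=
          mul_le_mul_of_nonneg_left (besselI_le_exp k (by positivity)) (Real.exp_nonneg _)
      _ = 1 := by rw [← Real.exp_add]; norm_num
  have hGi : IntegrableOn (fun u : ℝ => (t^2/4) * (Real.exp (-2*u) * besselI k (2*u) / u^2)) (Ioi 1) := by
    apply Integrable.const_mul
    apply Integrable.mono integrableOn_inv_sq hmeas_h.aestronglyMeasurable.restrict
    filter_upwards [ae_restrict_mem measurableSet_Ioi] with u hu
    have hu0 : (0:ℝ) < u := lt_trans one_pos hu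
    have hnn : 0 ≤ besselI k (2*u) := besselI_nonneg k (by positivity)
    rw [Real.norm_eq_abs, Real.norm_eq_abs, abs_of_nonneg (by positivity),
      abs_of_nonneg (by positivity : (0:ℝ) ≤ 1/u^2)]
    exact div_le_div_of_nonneg_right (hone u hu0) (by positivity)
  have hbound : ∀ᵐ u ∂(volume.restrict (Ioi (1:ℝ))),
      ‖discHeat u j * (Real.exp (-t^2/(4*u)) - 1) / u‖
        ≤ (t^2/4) * (Real.exp (-2*u) * besselI k (2*u) / u^2) := by
    filter_upwards [ae_restrict_mem measurableSet_Ioi] with u hu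
    have hu0 : (0:ℝ) < u := lt_trans one_pos hu
    have hnn : 0 ≤ besselI k (2*u) := besselI_nonneg k (by positivity)
    have hxnn : 0 ≤ t^2/(4*u) := by positivity
    have hexp_le : |Real.exp (-t^2/(4*u)) - 1| ≤ t^2/(4*u) := by
      have harg : -t^2/(4*u) = -(t^2/(4*u)) := by ring
      rw [harg]
      have h1 : Real.exp (-(t^2/(4*u))) ≤ 1 := by
        rw [show (1:ℝ) = Real.exp 0 from Real.exp_zero.symm]
        exact Real.exp_le_exp.mpr (by linarith)
      have h2 := Real.add_one_le_exp (-(t^2/(4*u)))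
      rw [abs_of_nonpos (by linarith)]
      linarith
    rw [Real.norm_eq_abs, abs_div, abs_mul, abs_of_pos hu0,
      abs_of_nonneg (show 0 ≤ discHeat u j from mul_nonneg (Real.exp_nonneg _) (besselI_nonneg _ (by positivity)))]
    calc discHeat u j * |Real.exp (-t^2/(4*u)) - 1| / u
        ≤ discHeat u j * (t^2/(4*u)) / u := by
          apply div_le_div_of_nonneg_right ?_ hu0.le
          exact mul_le_mul_of_nonneg_left hexp_le
            (mul_nonneg (Real.exp_nonneg _) (besselI_nonneg _ (by positivity)))
      _ = (t^2/4) * (Real.exp (-2*u) * besselI k (2*u) / u^2) := by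
          rw [discHeat, hk]
          field_simp
  have h1 : |∫ u in Ioi (1:ℝ), discHeat u j * (Real.exp (-t^2/(4*u)) - 1) / u|
      ≤ ∫ u in Ioi (1:ℝ), (t^2/4) * (Real.exp (-2*u) * besselI k (2*u) / u^2) := by
    rw [← Real.norm_eq_abs]
    exact norm_integral_le_of_norm_le hGi hbound
  refine h1.trans ?_
  rw [MeasureTheory.integral_const_mul]
  have hS : (0:ℝ) < Real.sqrt (1+(k:ℝ)) := Real.sqrt_pos.mpr (by positivity)
  calc (t^2/4) * ∫ u in Ioi (1:ℝ), Real.exp (-2*u) * besselI k (2*u) / u^2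
      ≤ (t^2/4) * (4 / Real.sqrt (1+(k:ℝ))) :=
        mul_le_mul_of_nonneg_left (besselI_int_bound k) (by positivity)
    _ = t^2 / Real.sqrt (1+(k:ℝ)) := by field_simp
    _ = t^2 / Real.sqrt (1+(j.natAbs:ℝ)) := by rw [hk]

lemma sqrt_ratio (n m : ℤ) :
    (1:ℝ) / Real.sqrt (1 + ((n-m).natAbs : ℝ))
      ≤ Real.sqrt (1 + (n.natAbs : ℝ)) / Real.sqrt (1 + (m.natAbs : ℝ)) := by
  have ha : (0:ℝ) < 1 + (n.natAbs:ℝ) := by positivity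
  have hb : (0:ℝ) < 1 + (m.natAbs:ℝ) := by positivity
  have hc : (0:ℝ) < 1 + ((n-m).natAbs:ℝ) := by positivity
  have htri : (m.natAbs : ℝ) ≤ (n.natAbs : ℝ) + ((n-m).natAbs : ℝ) := by
    have h := Int.natAbs_sub_le n (n-m)
    simp only [sub_sub_cancel] at h
    exact_mod_cast h
  have hprod : 1 + (m.natAbs:ℝ) ≤ (1 + (n.natAbs:ℝ)) * (1 + ((n-m).natAbs:ℝ)) := by
    have h1 : (0:ℝ) ≤ (n.natAbs:ℝ) := Nat.cast_nonneg _
    have h2 : (0:ℝ) ≤ ((n-m).natAbs:ℝ) := Nat.cast_nonneg _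
    nlinarith
  rw [div_le_div_iff₀ (Real.sqrt_pos.mpr hc) (Real.sqrt_pos.mpr hb), one_mul]
  calc Real.sqrt (1+(m.natAbs:ℝ))
      ≤ Real.sqrt ((1 + (n.natAbs:ℝ)) * (1 + ((n-m).natAbs:ℝ))) := Real.sqrt_le_sqrt hprod
    _ = Real.sqrt (1+(n.natAbs:ℝ)) * Real.sqrt (1+((n-m).natAbs:ℝ)) := Real.sqrt_mul ha.le _

theorem stmt12 (f : ℤ → ℝ)
    (hf : Summable fun m : ℤ => |f m| / Real.sqrt (1 + (m.natAbs : ℝ))) (n : ℤ) :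
    ∃ C > 0, (∀ t ∈ Ioo (0:ℝ) 1,
      |∑' m : ℤ, f m * ∫ u in Ioi (1:ℝ), discHeat u (n - m) * (Real.exp (-t^2/(4*u)) - 1) / u|
        ≤ C * t^2 * Real.sqrt (1 + (n.natAbs : ℝ)) *
            ∑' m : ℤ, |f m| / Real.sqrt (1 + (m.natAbs : ℝ))) ∧
    Filter.Tendsto
      (fun t : ℝ =>
        ∑' m : ℤ, f m * ∫ u in Ioi (1:ℝ), discHeat u (n - m) * (Real.exp (-t^2/(4*u)) - 1) / u)
      (nhdsWithin 0 (Ioi 0)) (nhds 0) := by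
  set a : ℝ := Real.sqrt (1 + (n.natAbs : ℝ)) with hadef
  have ha : 0 < a := Real.sqrt_pos.mpr (by positivity)
  have key : ∀ t : ℝ, ∀ m : ℤ,
      |f m * ∫ u in Ioi (1:ℝ), discHeat u (n - m) * (Real.exp (-t^2/(4*u)) - 1) / u|
        ≤ t^2 * a * (|f m| / Real.sqrt (1 + (m.natAbs : ℝ))) := by
    intro t m
    have hb : (0:ℝ) < Real.sqrt (1 + (m.natAbs:ℝ)) := Real.sqrt_pos.mpr (by positivity)
    rw [abs_mul]
    calc |f m| * |∫ u in Ioi (1:ℝ), discHeat u (n - m) * (Real.exp (-t^2/(4*u)) - 1) / u|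
        ≤ |f m| * (t^2 / Real.sqrt (1 + ((n-m).natAbs:ℝ))) :=
          mul_le_mul_of_nonneg_left (integral_term_bound (n-m) t) (abs_nonneg _)
      _ ≤ |f m| * (t^2 * (a / Real.sqrt (1 + (m.natAbs:ℝ)))) := by
          apply mul_le_mul_of_nonneg_left ?_ (abs_nonneg _)
          calc t^2 / Real.sqrt (1 + ((n-m).natAbs:ℝ))
              = t^2 * (1 / Real.sqrt (1 + ((n-m).natAbs:ℝ))) := by ring
            _ ≤ t^2 * (a / Real.sqrt (1 + (m.natAbs:ℝ))) :=
              mul_le_mul_of_nonneg_left (sqrt_ratio n m) (by positivity)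
      _ = t^2 * a * (|f m| / Real.sqrt (1 + (m.natAbs:ℝ))) := by ring
  have hsb : ∀ t : ℝ, Summable (fun m : ℤ =>
      t^2 * a * (|f m| / Real.sqrt (1 + (m.natAbs : ℝ)))) := fun t => hf.mul_left _
  have habs : ∀ t : ℝ, Summable (fun m : ℤ =>
      |f m * ∫ u in Ioi (1:ℝ), discHeat u (n - m) * (Real.exp (-t^2/(4*u)) - 1) / u|) := fun t =>
    (hsb t).of_nonneg_of_le (fun m => abs_nonneg _) (fun m => key t m)
  have hmain : ∀ t : ℝ,
      |∑' m : ℤ, f m * ∫ u in Ioi (1:ℝ), discHeat u (n - m) * (Real.exp (-t^2/(4*u)) - 1) / u|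
        ≤ t^2 * a * ∑' m : ℤ, |f m| / Real.sqrt (1 + (m.natAbs : ℝ)) := by
    intro t
    calc |∑' m : ℤ, f m * ∫ u in Ioi (1:ℝ), discHeat u (n - m) * (Real.exp (-t^2/(4*u)) - 1) / u|
        ≤ ∑' m : ℤ, |f m * ∫ u in Ioi (1:ℝ), discHeat u (n - m) * (Real.exp (-t^2/(4*u)) - 1) / u| := by
          rw [← Real.norm_eq_abs]
          exact norm_tsum_le_tsum_norm (by simpa only [Real.norm_eq_abs] using habs t)
      _ ≤ ∑' m : ℤ, t^2 * a * (|f m| / Real.sqrt (1 + (m.natAbs : ℝ))) :=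
          Summable.tsum_le_tsum (key t) (habs t) (hsb t)
      _ = t^2 * a * ∑' m : ℤ, |f m| / Real.sqrt (1 + (m.natAbs : ℝ)) := tsum_mul_left
  refine ⟨1, one_pos, fun t _ => ?_, ?_⟩
  · rw [one_mul]
    exact hmain t
  · refine squeeze_zero_norm
      (a := fun t : ℝ => t^2 * a * ∑' m : ℤ, |f m| / Real.sqrt (1 + (m.natAbs : ℝ)))
      (fun t => by rw [Real.norm_eq_abs]; exact hmain t) ?_
    have : Filter.Tendsto (fun t : ℝ => t^2 * a * ∑' m : ℤ, |f m| / Real.sqrt (1 + (m.natAbs : ℝ)))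
        (nhdsWithin 0 (Ioi 0)) (nhds (0^2 * a * ∑' m : ℤ, |f m| / Real.sqrt (1 + (m.natAbs : ℝ)))) := by
      apply Filter.Tendsto.mono_left ?_ nhdsWithin_le_nhds
      exact (((continuous_pow 2).mul continuous_const).mul continuous_const).tendsto 0
    simpa using this
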